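/- Let X be a bounded geometry metric space with ULA_μ. Then X admits a coarse embedding into the real Hilbert space ℓ²(ℕ). -/

import Mathlib

/-- `N_R(E)`, the `R`-neighbourhood of `E`. -/
def nbhd {X : Type*} [MetricSpace X] (R : ℝ) (E : Set X) : Set X :=
  {y | ∃ e ∈ E, dist y e ≤ R}

/-- `∂_R E = N_R(E) \ E`. -/
def bdry {X : Type*} [MetricSpace X] (R : ℝ) (E : Set X) : Set X :=
  nbhd R E \ E

/-- Bounded geometry. -/
def BoundedGeometry (X : Type*) [MetricSpace X] : Prop :=
  ∀ R : ℝ, 0 < R → ∃ N : ℕ, ∀ x : X,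
    {y | dist x y ≤ R}.Finite ∧ {y | dist x y ≤ R}.ncard ≤ N

/-- A probability measure on `X`, as a function. -/
def IsProbFn {X : Type*} (μ : X → ℝ) : Prop :=
  (∀ x, 0 ≤ μ x) ∧ Summable μ ∧ ∑' x, μ x = 1

/-- `μ(E)`. -/
noncomputable def measOf {X : Type*} (μ : X → ℝ) (E : Set X) : ℝ := ∑' x : E, μ x

/-- Uniform local amenability. -/
def ULA (X : Type*) [MetricSpace X] : Prop :=
  ∀ R : ℝ, 0 < R → ∀ ε : ℝ, 0 < ε → ∃ S : ℝ, 0 < S ∧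
    ∀ F : Set X, F.Finite → ∃ E : Set X, E.Finite ∧
      EMetric.diam E ≤ ENNReal.ofReal S ∧
      ((bdry R E ∩ F).ncard : ℝ) < ε * ((E ∩ F).ncard : ℝ)

/-- Measured uniform local amenability. -/
def ULAmu (X : Type*) [MetricSpace X] : Prop :=
  ∀ R : ℝ, 0 < R → ∀ ε : ℝ, 0 < ε → ∃ S : ℝ, 0 < S ∧
    ∀ μ : X → ℝ, IsProbFn μ → ∃ E : Set X, E.Finite ∧
      EMetric.diam E ≤ ENNReal.ofReal S ∧
      measOf μ (bdry R E) < ε * measOf μ E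

/-- Coarse embedding. -/
def CoarseEmbedding {X Y : Type*} [MetricSpace X] [MetricSpace Y] (f : X → Y) : Prop :=
  ∃ ρm ρp : ℝ → ℝ, Monotone ρm ∧ Monotone ρp ∧
    Filter.Tendsto ρm Filter.atTop Filter.atTop ∧
    ∀ x₁ x₂ : X, ρm (dist x₁ x₂) ≤ dist (f x₁) (f x₂) ∧
      dist (f x₁) (f x₂) ≤ ρp (dist x₁ x₂)

namespace ULAproof
open scoped Classical

variable {X : Type*} [MetricSpace X]

lemma measOf_eq_sum (μ : X → ℝ) (s : Finset X) (h0 : ∀ z ∉ s, μ z = 0) (E : Set X) :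
    measOf μ E = ∑ z ∈ s.filter (fun z => z ∈ E), μ z := by
  classical
  rw [measOf, tsum_subtype, tsum_eq_sum (s := s)
    (fun b hb => by by_cases hbE : b ∈ E <;> simp [Set.indicator, hbE, h0 b hb]),
    Finset.sum_filter]
  exact Finset.sum_congr rfl fun z _ => by by_cases hzE : z ∈ E <;> simp [Set.indicator, hzE]

lemma dist_le_of_diam {E : Set X} {S : ℝ} (hS : 0 ≤ S)
    (hd : EMetric.diam E ≤ ENNReal.ofReal S) {a b : X} (ha : a ∈ E) (hb : b ∈ E) :
    dist a b ≤ S := by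
  rw [dist_edist]
  exact ENNReal.toReal_le_of_le_ofReal hS ((EMetric.edist_le_diam_of_mem ha hb).trans hd)

/-- Finitary Følner decomposition from ULAmu (core induction). -/
lemma decomp (R ε₀ S : ℝ) (hR : 0 < R) (hε : 0 < ε₀) (hS : 0 ≤ S)
    (hU : ∀ μ : X → ℝ, IsProbFn μ → ∃ E : Set X, E.Finite ∧
      EMetric.diam E ≤ ENNReal.ofReal S ∧
      measOf μ (bdry (2*R) E) < ε₀ * measOf μ E) :
    ∀ (n : ℕ) (sw : Finset X) (w : X → ℝ), sw.card ≤ n →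
      (∀ z, 0 ≤ w z) → (∀ z ∉ sw, w z = 0) →
      ∃ L : List (Finset X),
        (∀ C ∈ L, C.Nonempty ∧ C ⊆ sw ∧ ∀ a ∈ C, ∀ b ∈ C, dist a b ≤ S) ∧
        List.Pairwise (fun C D => ∀ a ∈ C, ∀ b ∈ D, 2*R < dist a b) L ∧
        ∑ z ∈ sw, w z ≤ (1+ε₀) * (L.map fun C => ∑ z ∈ C, w z).sum := by
  classical
  intro n
  induction n with
  | zero =>
    intro sw w hcard hw0 hwsupp
    refine ⟨[], by simp, by simp, ?_⟩
    have : sw = ∅ := Finset.card_eq_zero.mp (Nat.le_zero.mp hcard)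
    simp [this]
  | succ n ih =>
    intro sw w hcard hw0 hwsupp
    by_cases hW : ∑ z ∈ sw, w z ≤ 0
    · refine ⟨[], by simp, by simp, ?_⟩
      simpa using hW
    push_neg at hW
    set W : ℝ := ∑ z ∈ sw, w z with hWdef
    set μ : X → ℝ := fun z => w z / W with hμdef
    have hμsupp : ∀ z ∉ sw, μ z = 0 := fun z hz => by simp [hμdef, hwsupp z hz]
    have hμprob : IsProbFn μ := by
      refine ⟨fun z => div_nonneg (hw0 z) hW.le, summable_of_ne_finset_zero hμsupp, ?_⟩
      rw [tsum_eq_sum hμsupp]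
      simp only [hμdef, ← Finset.sum_div]
      exact div_self hW.ne'
    obtain ⟨E, hEfin, hEdiam, hEineq⟩ := hU μ hμprob
    have hmE : measOf μ E = (∑ z ∈ sw.filter (fun z => z ∈ E), w z) / W := by
      rw [measOf_eq_sum μ sw hμsupp E, Finset.sum_div]
    have hmB : measOf μ (bdry (2*R) E)
        = (∑ z ∈ sw.filter (fun z => z ∈ bdry (2*R) E), w z) / W := by
      rw [measOf_eq_sum μ sw hμsupp _, Finset.sum_div]
    set C : Finset X := sw.filter (fun z => z ∈ E) with hCdef
    have hmBpos : 0 ≤ measOf μ (bdry (2*R) E) := by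
      rw [hmB]
      exact div_nonneg (Finset.sum_nonneg fun z _ => hw0 z) hW.le
    have hEpos : 0 < measOf μ E := by
      rcases lt_or_ge 0 (measOf μ E) with h | h
      · exact h
      · exfalso
        have : ε₀ * measOf μ E ≤ 0 := mul_nonpos_of_nonneg_of_nonpos hε.le h
        linarith
    have hCpos : 0 < ∑ z ∈ C, w z := by
      have := hEpos
      rw [hmE] at this
      have := (div_pos_iff.mp this)
      rcases this with ⟨h1, _⟩ | ⟨_, h2⟩
      · exact h1
      · linarith
    have hCne : C.Nonempty := by
      by_contra hC
      rw [Finset.not_nonempty_iff_eq_empty] at hC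
      rw [hC] at hCpos; simp at hCpos
    -- remaining region
    set sw' : Finset X := sw.filter (fun z => ¬ ∃ a ∈ C, dist z a ≤ 2*R) with hsw'def
    set w' : X → ℝ := fun z => if z ∈ sw' then w z else 0 with hw'def
    have hsub : sw' ⊆ sw := Finset.filter_subset _ _
    have hssub : sw' ⊂ sw := by
      refine Finset.ssubset_iff_of_subset hsub |>.mpr ?_
      obtain ⟨c, hc⟩ := hCne
      refine ⟨c, (Finset.mem_filter.mp hc).1, ?_⟩
      intro hmem
      have := (Finset.mem_filter.mp hmem).2
      exact this ⟨c, hc, by simp [dist_self]; positivity⟩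
    have hcard' : sw'.card ≤ n := by
      have := Finset.card_lt_card hssub
      omega
    obtain ⟨L', hL'1, hL'2, hL'3⟩ := ih sw' w' hcard'
      (fun z => by by_cases hz : z ∈ sw' <;> simp [hw'def, hz, hw0 z])
      (fun z hz => by simp [hw'def, hz])
    refine ⟨C :: L', ?_, ?_, ?_⟩
    · intro D hD
      rcases List.mem_cons.mp hD with rfl | hD
      · exact ⟨hCne, Finset.filter_subset _ _, fun a ha b hb =>
          dist_le_of_diam hS hEdiam (Finset.mem_filter.mp ha).2 (Finset.mem_filter.mp hb).2⟩
      · obtain ⟨h1, h2, h3⟩ := hL'1 D hD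
        exact ⟨h1, h2.trans hsub, h3⟩
    · refine List.Pairwise.cons ?_ hL'2
      intro D hD a ha b hb
      have hbsw' : b ∈ sw' := (hL'1 D hD).2.1 hb
      have := (Finset.mem_filter.mp hbsw').2
      push_neg at this
      have := this a ha
      rw [dist_comm] at this
      linarith
    · -- mass accounting
      have hsplit : ∑ z ∈ sw, w z
          = ∑ z ∈ C, w z + ∑ z ∈ sw.filter (fun z => ¬ z ∈ E), w z := by
        rw [hCdef, Finset.sum_filter_add_sum_filter_not]
      have hsplit2 : ∑ z ∈ sw.filter (fun z => ¬ z ∈ E), w z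
          = ∑ z ∈ (sw.filter (fun z => ¬ z ∈ E)).filter (fun z => ∃ a ∈ C, dist z a ≤ 2*R), w z
            + ∑ z ∈ (sw.filter (fun z => ¬ z ∈ E)).filter (fun z => ¬ ∃ a ∈ C, dist z a ≤ 2*R), w z := by
        rw [Finset.sum_filter_add_sum_filter_not]
      -- part A is inside the boundary
      have hA : (sw.filter (fun z => ¬ z ∈ E)).filter (fun z => ∃ a ∈ C, dist z a ≤ 2*R)
          ⊆ sw.filter (fun z => z ∈ bdry (2*R) E) := by
        intro z hz
        obtain ⟨hz1, hz2⟩ := Finset.mem_filter.mp hz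
        obtain ⟨hz3, hz4⟩ := Finset.mem_filter.mp hz1
        obtain ⟨a, haC, hdist⟩ := hz2
        refine Finset.mem_filter.mpr ⟨hz3, ⟨⟨a, (Finset.mem_filter.mp haC).2, hdist⟩, hz4⟩⟩
      have hAbound : ∑ z ∈ (sw.filter (fun z => ¬ z ∈ E)).filter (fun z => ∃ a ∈ C, dist z a ≤ 2*R), w z
          ≤ ε₀ * ∑ z ∈ C, w z := by
        calc _ ≤ ∑ z ∈ sw.filter (fun z => z ∈ bdry (2*R) E), w z :=
              Finset.sum_le_sum_of_subset_of_nonneg hA (fun z _ _ => hw0 z)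
          _ = W * measOf μ (bdry (2*R) E) := by
              rw [hmB]; field_simp
          _ ≤ W * (ε₀ * measOf μ E) := by
              exact mul_le_mul_of_nonneg_left hEineq.le hW.le
          _ = ε₀ * ∑ z ∈ C, w z := by
              rw [hmE]; field_simp
      -- part B is inside sw'
      have hBsub : (sw.filter (fun z => ¬ z ∈ E)).filter (fun z => ¬ ∃ a ∈ C, dist z a ≤ 2*R)
          ⊆ sw' := by
        intro z hz
        obtain ⟨hz1, hz2⟩ := Finset.mem_filter.mp hz
        exact Finset.mem_filter.mpr ⟨(Finset.mem_filter.mp hz1).1, hz2⟩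
      have hBbound : ∑ z ∈ (sw.filter (fun z => ¬ z ∈ E)).filter (fun z => ¬ ∃ a ∈ C, dist z a ≤ 2*R), w z
          ≤ ∑ z ∈ sw', w' z := by
        have : ∀ z ∈ sw', w z ≤ w' z → True := fun _ _ _ => trivial
        calc _ ≤ ∑ z ∈ sw', w z :=
              Finset.sum_le_sum_of_subset_of_nonneg hBsub (fun z _ _ => hw0 z)
          _ = ∑ z ∈ sw', w' z := Finset.sum_congr rfl fun z hz => by simp [hw'def, hz]
      have hw'L : (L'.map fun C => ∑ z ∈ C, w' z).sum = (L'.map fun C => ∑ z ∈ C, w z).sum := by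
        congr 1
        refine List.map_congr_left ?_
        intro D hD
        refine Finset.sum_congr rfl fun z hz => ?_
        simp [hw'def, (hL'1 D hD).2.1 hz]
      have hrec : ∑ z ∈ sw', w' z ≤ (1+ε₀) * (L'.map fun C => ∑ z ∈ C, w z).sum := by
        rw [← hw'L]; exact hL'3
      have hmapsum : ((C :: L').map fun C => ∑ z ∈ C, w z).sum
          = ∑ z ∈ C, w z + (L'.map fun C => ∑ z ∈ C, w z).sum := by simp
      rw [hmapsum]
      have h1e : (0:ℝ) < 1 + ε₀ := by linarith
      nlinarith [hsplit, hsplit2, hAbound, hBbound, hrec, hCpos]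
lemma foldr_union_mem (L : List (Finset X)) (z : X) :
    z ∈ L.foldr (· ∪ ·) ∅ ↔ ∃ C ∈ L, z ∈ C := by
  induction L with
  | nil => simp
  | cons C L ih => simp [ih]

lemma sum_foldr_union (w : X → ℝ) (R : ℝ) (hR : 0 < R) :
    ∀ L : List (Finset X),
      List.Pairwise (fun C D => ∀ a ∈ C, ∀ b ∈ D, 2*R < dist a b) L →
      ∑ z ∈ L.foldr (· ∪ ·) ∅, w z = (L.map fun C => ∑ z ∈ C, w z).sum := by
  intro L
  induction L with
  | nil => simp
  | cons C L ih =>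
    intro hp
    have hd : Disjoint C (L.foldr (· ∪ ·) ∅) := by
      rw [Finset.disjoint_left]
      intro a haC haU
      obtain ⟨D, hD, haD⟩ := (foldr_union_mem L a).mp haU
      have := (List.pairwise_cons.mp hp).1 D hD a haC a haD
      simp [dist_self] at this
      linarith
    simp only [List.foldr_cons, List.map_cons, List.sum_cons]
    rw [Finset.sum_union hd, ih (List.pairwise_cons.mp hp).2]

lemma decomp' (R ε₀ S : ℝ) (hR : 0 < R) (hε : 0 < ε₀) (hS : 0 ≤ S)
    (hU : ∀ μ : X → ℝ, IsProbFn μ → ∃ E : Set X, E.Finite ∧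
      EMetric.diam E ≤ ENNReal.ofReal S ∧
      measOf μ (bdry (2*R) E) < ε₀ * measOf μ E)
    (sw : Finset X) (w : X → ℝ) (hw0 : ∀ z, 0 ≤ w z) (hwsupp : ∀ z ∉ sw, w z = 0)
    (hw1 : ∑ z ∈ sw, w z = 1) :
    ∃ L : List (Finset X),
      (∀ C ∈ L, C.Nonempty ∧ ∀ a ∈ C, ∀ b ∈ C, dist a b ≤ S) ∧
      List.Pairwise (fun C D => ∀ a ∈ C, ∀ b ∈ D, 2*R < dist a b) L ∧
      ∑ z ∈ sw.filter (fun z => ¬ ∃ C ∈ L, z ∈ C), w z ≤ ε₀ := by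
  obtain ⟨L, h1, h2, h3⟩ := decomp R ε₀ S hR hε hS hU sw.card sw w le_rfl hw0 hwsupp
  refine ⟨L, fun C hC => ⟨(h1 C hC).1, (h1 C hC).2.2⟩, h2, ?_⟩
  set G := L.foldr (· ∪ ·) ∅ with hGdef
  have hGsub : G ⊆ sw := by
    intro z hz
    obtain ⟨C, hC, hzC⟩ := (foldr_union_mem L z).mp hz
    exact (h1 C hC).2.1 hzC
  have hGsum : ∑ z ∈ G, w z = (L.map fun C => ∑ z ∈ C, w z).sum := sum_foldr_union w R hR L h2
  have hfil : sw.filter (fun z => ¬ ∃ C ∈ L, z ∈ C) = sw \ G := by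
    ext z
    simp [Finset.mem_sdiff, foldr_union_mem, hGdef]
  rw [hfil]
  have hsd : ∑ z ∈ sw \ G, w z + ∑ z ∈ G, w z = 1 := by
    rw [Finset.sum_sdiff hGsub, hw1]
  have hGle1 : ∑ z ∈ G, w z ≤ 1 := by
    rw [← hw1]
    exact Finset.sum_le_sum_of_subset_of_nonneg hGsub (fun z _ _ => hw0 z)
  rw [hw1, ← hGsum] at h3
  nlinarith [hsd, hGle1, h3]

section Game

variable (B : X → Finset X)

def Kset : Set (X → X → ℝ) :=
  {ξ | ∀ x, (∀ z, 0 ≤ ξ x z) ∧ (∀ z, z ∉ B x → ξ x z = 0) ∧ ∑ z ∈ B x, ξ x z = 1}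

noncomputable def gpay (p : X × X) (ξ : X → X → ℝ) : ℝ :=
  ∑ z ∈ B p.1 ∪ B p.2, |ξ p.1 z - ξ p.2 z|

variable {B}

lemma eval_continuous (x z : X) : Continuous fun ξ : X → X → ℝ => ξ x z :=
  (continuous_apply z).comp (continuous_apply x)

lemma Kset_isClosed : IsClosed (Kset B) := by
  have heq : Kset B = (⋂ x, ⋂ z, {ξ : X → X → ℝ | 0 ≤ ξ x z}) ∩
      ((⋂ x, ⋂ z ∈ {z | z ∉ B x}, {ξ : X → X → ℝ | ξ x z = 0}) ∩
       (⋂ x, {ξ : X → X → ℝ | ∑ z ∈ B x, ξ x z = 1})) := by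
    ext ξ
    simp only [Kset, Set.mem_setOf_eq, Set.mem_inter_iff, Set.mem_iInter]
    constructor
    · intro h
      exact ⟨fun x z => (h x).1 z, ⟨fun x z hz => (h x).2.1 z hz, fun x => (h x).2.2⟩⟩
    · rintro ⟨h1, h2, h3⟩ x
      exact ⟨fun z => h1 x z, fun z hz => h2 x z hz, h3 x⟩
  rw [heq]
  refine IsClosed.inter ?_ (IsClosed.inter ?_ ?_)
  · exact isClosed_iInter fun x => isClosed_iInter fun z =>
      isClosed_le continuous_const (eval_continuous x z)
  · exact isClosed_iInter fun x => isClosed_iInter fun z => isClosed_iInter fun _ =>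
      isClosed_eq (eval_continuous x z) continuous_const
  · exact isClosed_iInter fun x =>
      isClosed_eq (continuous_finset_sum _ fun z _ => eval_continuous x z) continuous_const

lemma Kset_isCompact : IsCompact (Kset B) := by
  refine IsCompact.of_isClosed_subset
    (isCompact_univ_pi fun x => isCompact_univ_pi fun z => isCompact_Icc (a := (0:ℝ)) (b := 1))
    Kset_isClosed ?_
  intro ξ hξ
  simp only [Set.mem_pi, Set.mem_univ, forall_true_left, Set.mem_Icc]
  intro x
  obtain ⟨h0, hz0, hsum⟩ := hξ x
  intro z
  refine ⟨h0 z, ?_⟩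
  by_cases hzB : z ∈ B x
  · calc ξ x z ≤ ∑ z' ∈ B x, ξ x z' := Finset.single_le_sum (fun i _ => h0 i) hzB
      _ = 1 := hsum
  · simp [hz0 z hzB]

lemma Kset_convex : Convex ℝ (Kset B) := by
  intro ξ hξ η hη a b ha hb hab
  intro x
  obtain ⟨h1, h2, h3⟩ := hξ x
  obtain ⟨g1, g2, g3⟩ := hη x
  refine ⟨fun z => ?_, fun z hz => ?_, ?_⟩
  · show 0 ≤ a * ξ x z + b * η x z
    have := h1 z; have := g1 z
    positivity
  · show a * ξ x z + b * η x z = 0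
    rw [h2 z hz, g2 z hz]; ring
  · show ∑ z ∈ B x, (a * ξ x z + b * η x z) = 1
    rw [Finset.sum_add_distrib, ← Finset.mul_sum, ← Finset.mul_sum, h3, g3]
    simpa using hab

lemma Kset_nonempty (hB : ∀ x, x ∈ B x) : (Kset B).Nonempty := by
  refine ⟨fun x z => if z = x then 1 else 0, fun x => ⟨fun z => by positivity, fun z hz => ?_, ?_⟩⟩
  · have : z ≠ x := fun h => hz (h ▸ hB x)
    simp [this]
  · rw [Finset.sum_ite_eq' (B x) x (fun _ => (1:ℝ))]
    simp [hB x]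

lemma gpay_continuous (p : X × X) : Continuous fun ξ : X → X → ℝ => gpay B p ξ :=
  continuous_finset_sum _ fun z _ =>
    ((eval_continuous p.1 z).sub (eval_continuous p.2 z)).abs

lemma gpay_nonneg (p : X × X) (ξ : X → X → ℝ) : 0 ≤ gpay B p ξ :=
  Finset.sum_nonneg fun z _ => abs_nonneg _

lemma Kset_sum_eq_one {ξ : X → X → ℝ} (hξ : ξ ∈ Kset B) (x : X) {U : Finset X}
    (hU : B x ⊆ U) : ∑ z ∈ U, ξ x z = 1 := by
  obtain ⟨h1, h2, h3⟩ := hξ x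
  rw [← h3]
  exact (Finset.sum_subset hU (fun z _ hz2 => h2 z hz2)).symm

lemma gpay_le_two {ξ : X → X → ℝ} (hξ : ξ ∈ Kset B) (p : X × X) : gpay B p ξ ≤ 2 := by
  have h1 := (hξ p.1).1
  have g1 := (hξ p.2).1
  calc gpay B p ξ ≤ ∑ z ∈ B p.1 ∪ B p.2, (ξ p.1 z + ξ p.2 z) := by
        refine Finset.sum_le_sum fun z _ => ?_
        have := h1 z; have := g1 z
        rw [abs_sub_le_iff]
        constructor <;> linarith
    _ = 2 := by
        rw [Finset.sum_add_distrib, Kset_sum_eq_one hξ p.1 Finset.subset_union_left,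
          Kset_sum_eq_one hξ p.2 Finset.subset_union_right]
        norm_num

lemma gpay_convex (p : X × X) (ξ η : X → X → ℝ) {a b : ℝ} (ha : 0 ≤ a) (hb : 0 ≤ b) :
    gpay B p (a • ξ + b • η) ≤ a * gpay B p ξ + b * gpay B p η := by
  simp only [gpay, Finset.mul_sum, ← Finset.sum_add_distrib]
  refine Finset.sum_le_sum fun z _ => ?_
  have heq : (a • ξ + b • η) p.1 z - (a • ξ + b • η) p.2 z
      = a * (ξ p.1 z - ξ p.2 z) + b * (η p.1 z - η p.2 z) := by
    simp [Pi.add_apply, Pi.smul_apply, smul_eq_mul]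
    ring
  rw [heq]
  calc |a * (ξ p.1 z - ξ p.2 z) + b * (η p.1 z - η p.2 z)|
      ≤ |a * (ξ p.1 z - ξ p.2 z)| + |b * (η p.1 z - η p.2 z)| := abs_add_le _ _
    _ = a * |ξ p.1 z - ξ p.2 z| + b * |η p.1 z - η p.2 z| := by
        rw [abs_mul, abs_mul, abs_of_nonneg ha, abs_of_nonneg hb]

end Game

/-- Finite satisfiability of the property-A constraints, via Hahn-Banach duality
and the Følner decomposition. -/
lemma finiteSat (R ε S : ℝ) (hR : 0 < R) (hε : 0 < ε) (hS : 0 ≤ S)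
    (hU : ∀ μ : X → ℝ, IsProbFn μ → ∃ E : Set X, E.Finite ∧
      EMetric.diam E ≤ ENNReal.ofReal S ∧
      measOf μ (bdry (2*R) E) < (ε/8) * measOf μ E)
    (B : X → Finset X) (hBiff : ∀ x z, z ∈ B x ↔ dist x z ≤ R + S)
    (F : Finset (X × X)) (hF : ∀ p ∈ F, dist p.1 p.2 ≤ R) :
    ∃ ξ ∈ Kset B, ∀ p ∈ F, gpay B p ξ ≤ ε := by
  have hB : ∀ x, x ∈ B x := fun x => (hBiff x x).mpr (by simp [dist_self]; positivity)
  by_contra hbad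
  push_neg at hbad
  -- hbad : ∀ ξ ∈ Kset B, ∃ p ∈ F, ε < gpay B p ξ
  -- The two convex sets in `↥F → ℝ`
  set Aset : Set (↥F → ℝ) :=
    {v | ∃ ξ ∈ Kset B, ∀ p : ↥F, gpay B (p : X × X) ξ ≤ v p ∧ v p ≤ 2} with hAdef
  set Bset : Set (↥F → ℝ) := {v | ∀ p : ↥F, v p ≤ ε} with hBdef
  obtain ⟨ξ₀, hξ₀⟩ := Kset_nonempty hB
  have hAne : Aset.Nonempty :=
    ⟨fun _ => 2, ξ₀, hξ₀, fun p => ⟨gpay_le_two hξ₀ _, le_rfl⟩⟩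
  have hAconv : Convex ℝ Aset := by
    rintro v ⟨ξ, hξ, hv⟩ v' ⟨ξ', hξ', hv'⟩ a b ha hb hab
    refine ⟨a • ξ + b • ξ', Kset_convex hξ hξ' ha hb hab, fun p => ⟨?_, ?_⟩⟩
    · calc gpay B (p : X × X) (a • ξ + b • ξ')
          ≤ a * gpay B (p : X × X) ξ + b * gpay B (p : X × X) ξ' := gpay_convex _ _ _ ha hb
        _ ≤ a * v p + b * v' p := by
            have := (hv p).1; have := (hv' p).1
            have := mul_le_mul_of_nonneg_left (hv p).1 ha
            have := mul_le_mul_of_nonneg_left (hv' p).1 hb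
            show _ ≤ (a • v + b • v') p
            simp only [Pi.add_apply, Pi.smul_apply, smul_eq_mul]
            linarith
    · show (a • v + b • v') p ≤ 2
      simp only [Pi.add_apply, Pi.smul_apply, smul_eq_mul]
      have := mul_le_mul_of_nonneg_left (hv p).2 ha
      have := mul_le_mul_of_nonneg_left (hv' p).2 hb
      linarith
  have hAcomp : IsCompact Aset := by
    set Tset : Set ((X → X → ℝ) × (↥F → ℝ)) :=
      {q | q.1 ∈ Kset B ∧ ∀ p : ↥F, gpay B (p : X × X) q.1 ≤ q.2 p ∧ q.2 p ≤ 2} with hTdef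
    have hTclosed : IsClosed Tset := by
      have : Tset = (Prod.fst ⁻¹' Kset B) ∩
          ⋂ p : ↥F, ({q : (X → X → ℝ) × (↥F → ℝ) | gpay B (p : X × X) q.1 ≤ q.2 p}
            ∩ {q | q.2 p ≤ 2}) := by
        ext q
        simp only [hTdef, Set.mem_setOf_eq, Set.mem_inter_iff, Set.mem_preimage, Set.mem_iInter,
          forall_and]
      rw [this]
      refine IsClosed.inter (Kset_isClosed.preimage continuous_fst) (isClosed_iInter fun p => IsClosed.inter ?_ ?_)
      · exact isClosed_le ((gpay_continuous (p : X × X)).comp continuous_fst)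
          ((continuous_apply p).comp continuous_snd)
      · exact isClosed_le ((continuous_apply p).comp continuous_snd) continuous_const
    have hTcomp : IsCompact Tset := by
      refine IsCompact.of_isClosed_subset
        ((Kset_isCompact (B := B)).prod (isCompact_univ_pi fun _ => isCompact_Icc (a := (0:ℝ)) (b := 2)))
        hTclosed ?_
      rintro q ⟨h1, h2⟩
      refine ⟨h1, ?_⟩
      intro p _
      exact ⟨le_trans (gpay_nonneg _ _) (h2 p).1, (h2 p).2⟩
    have himg : Aset = Prod.snd '' Tset := by
      ext v
      constructor
      · rintro ⟨ξ, hξ, hv⟩; exact ⟨(ξ, v), ⟨hξ, hv⟩, rfl⟩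
      · rintro ⟨q, ⟨h1, h2⟩, rfl⟩; exact ⟨q.1, h1, h2⟩
    rw [himg]
    exact hTcomp.image continuous_snd
  have hBconv : Convex ℝ Bset := by
    intro v hv v' hv' a b ha hb hab p
    have := mul_le_mul_of_nonneg_left (hv p) ha
    have := mul_le_mul_of_nonneg_left (hv' p) hb
    show (a • v + b • v') p ≤ ε
    simp only [Pi.add_apply, Pi.smul_apply, smul_eq_mul]
    nlinarith
  have hBclosed : IsClosed Bset := by
    have : Bset = ⋂ p : ↥F, {v : ↥F → ℝ | v p ≤ ε} := by
      ext v; simp only [hBdef, Set.mem_setOf_eq, Set.mem_iInter]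
    rw [this]
    exact isClosed_iInter fun p => isClosed_le (continuous_apply p) continuous_const
  have hdisj : Disjoint Aset Bset := by
    rw [Set.disjoint_left]
    rintro v ⟨ξ, hξ, hv⟩ hvB
    obtain ⟨p, hp, hgt⟩ := hbad ξ hξ
    exact absurd ((hv ⟨p, hp⟩).1.trans (hvB ⟨p, hp⟩)) (not_le.mpr hgt)
  obtain ⟨f, u, v, hfA, huv, hfB⟩ :=
    geometric_hahn_banach_compact_closed hAconv hAcomp hBconv hBclosed hdisj
  classical
  have hf : ∀ w : ↥F → ℝ, f w = ∑ p : ↥F, w p * f ((Pi.single p (1:ℝ) : ↥F → ℝ)) := by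
    intro w
    have hw : ∑ p : ↥F, Pi.single p (w p) = w := Finset.univ_sum_single w
    conv_lhs => rw [← hw]
    rw [map_sum]
    refine Finset.sum_congr rfl fun p _ => ?_
    have : Pi.single p (w p) = w p • (Pi.single p (1:ℝ) : ↥F → ℝ) := by
      rw [← Pi.single_smul, smul_eq_mul, mul_one]
    rw [this, map_smul, smul_eq_mul]
  set ν : ↥F → ℝ := fun p => -(f ((Pi.single p (1:ℝ) : ↥F → ℝ))) with hνdef
  have hν0 : ∀ p, 0 ≤ ν p := by
    intro p₀
    by_contra hneg
    push_neg at hneg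
    have hc : 0 < f ((Pi.single p₀ (1:ℝ) : ↥F → ℝ)) := by
      simp only [hνdef] at hneg; linarith
    set t : ℝ := max 0 ((f (fun _ => ε) - v) / f ((Pi.single p₀ (1:ℝ) : ↥F → ℝ))) with htdef
    have ht0 : 0 ≤ t := le_max_left _ _
    have hbB : ((fun _ => ε) - t • (Pi.single p₀ (1:ℝ) : ↥F → ℝ)) ∈ Bset := by
      intro p
      simp only [Pi.sub_apply, Pi.smul_apply, smul_eq_mul]
      have h01 : (0:ℝ) ≤ (Pi.single p₀ (1:ℝ) : ↥F → ℝ) p := by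
        by_cases hpp : p = p₀ <;> simp [Pi.single_apply, hpp]
      nlinarith
    have := hfB _ hbB
    rw [map_sub, map_smul, smul_eq_mul] at this
    -- this : v < f (fun _ => ε) - t * f (single p₀ 1)
    have hge : (f (fun _ => ε) - v) / f ((Pi.single p₀ (1:ℝ) : ↥F → ℝ)) ≤ t := le_max_right _ _
    have : t * f ((Pi.single p₀ (1:ℝ) : ↥F → ℝ)) ≥ f (fun _ => ε) - v := by
      rw [ge_iff_le, ← div_le_iff₀ hc] at *
      exact hge
    linarith
  have htot : 0 < ∑ p : ↥F, ν p := by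
    rcases (Finset.sum_nonneg fun p _ => hν0 p).lt_or_eq with h | h
    · exact h
    · exfalso
      have hzero : ∀ p ∈ Finset.univ, ν p = 0 :=
        (Finset.sum_eq_zero_iff_of_nonneg fun p _ => hν0 p).mp h.symm
      have hf0 : ∀ w : ↥F → ℝ, f w = 0 := by
        intro w
        rw [hf]
        refine Finset.sum_eq_zero fun p _ => ?_
        have := hzero p (Finset.mem_univ p)
        simp only [hνdef, neg_eq_zero] at this
        rw [this, mul_zero]
      obtain ⟨a₀, ha₀⟩ := hAne
      have h1 := hfA a₀ ha₀
      have h2 := hfB (fun _ => ε) (fun p => le_rfl)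
      rw [hf0] at h1 h2
      linarith
  have hkey : ∀ ξ ∈ Kset B, ε * (∑ p : ↥F, ν p) < ∑ p : ↥F, ν p * gpay B (p : X × X) ξ := by
    intro ξ hξ
    have haA : (fun p : ↥F => gpay B (p : X × X) ξ) ∈ Aset :=
      ⟨ξ, hξ, fun p => ⟨le_rfl, gpay_le_two hξ _⟩⟩
    have h1 := hfA _ haA
    have h2 := hfB (fun _ => ε) (fun p => le_rfl)
    rw [hf] at h1 h2
    have e1 : ∑ p : ↥F, gpay B (p : X × X) ξ * f ((Pi.single p (1:ℝ) : ↥F → ℝ))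
        = -∑ p : ↥F, ν p * gpay B (p : X × X) ξ := by
      rw [← Finset.sum_neg_distrib]
      exact Finset.sum_congr rfl fun p _ => by simp only [hνdef]; ring
    have e2 : ∑ p : ↥F, (fun _ : ↥F => ε) p * f ((Pi.single p (1:ℝ) : ↥F → ℝ))
        = -(ε * ∑ p : ↥F, ν p) := by
      rw [Finset.mul_sum, ← Finset.sum_neg_distrib]
      exact Finset.sum_congr rfl fun p _ => by simp only [hνdef]; ring
    rw [e1] at h1
    rw [e2] at h2
    linarith
  -- normalize into probability weights on pairs
  set q : ↥F → ℝ := fun p => ν p / (∑ p : ↥F, ν p) with hqdef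
  have hq0 : ∀ p, 0 ≤ q p := fun p => div_nonneg (hν0 p) htot.le
  have hqsum : ∑ p : ↥F, q p = 1 := by
    rw [hqdef, ← Finset.sum_div]
    exact div_self htot.ne'
  have hkeyq : ∀ ξ ∈ Kset B, ε < ∑ p : ↥F, q p * gpay B (p : X × X) ξ := by
    intro ξ hξ
    have h := hkey ξ hξ
    have : ∑ p : ↥F, q p * gpay B (p : X × X) ξ
        = (∑ p : ↥F, ν p * gpay B (p : X × X) ξ) / (∑ p : ↥F, ν p) := by
      rw [Finset.sum_div]
      exact Finset.sum_congr rfl fun p _ => by rw [hqdef]; ring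
    rw [this, lt_div_iff₀ htot]
    linarith
  -- the marginal measure on X
  set sw : Finset X := F.image Prod.fst ∪ F.image Prod.snd with hswdef
  set w : X → ℝ := fun z => ∑ p : ↥F, q p *
    ((if (p : X × X).1 = z then (1:ℝ) else 0) + (if (p : X × X).2 = z then (1:ℝ) else 0)) / 2
    with hwdef
  have hw0 : ∀ z, 0 ≤ w z := by
    intro z
    refine Finset.sum_nonneg fun p _ => ?_
    have := hq0 p
    positivity
  have hmem1 : ∀ p : ↥F, (p : X × X).1 ∈ sw := fun p =>
    Finset.mem_union_left _ (Finset.mem_image.mpr ⟨(p : X × X), p.2, rfl⟩)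
  have hmem2 : ∀ p : ↥F, (p : X × X).2 ∈ sw := fun p =>
    Finset.mem_union_right _ (Finset.mem_image.mpr ⟨(p : X × X), p.2, rfl⟩)
  have hwsupp : ∀ z ∉ sw, w z = 0 := by
    intro z hz
    rw [hwdef]
    refine Finset.sum_eq_zero fun p _ => ?_
    have h1 : (p : X × X).1 ≠ z := fun h => hz (h ▸ hmem1 p)
    have h2 : (p : X × X).2 ≠ z := fun h => hz (h ▸ hmem2 p)
    simp [h1, h2]
  have hw1 : ∑ z ∈ sw, w z = 1 := by
    rw [hwdef, Finset.sum_comm]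
    have hper : ∀ p : ↥F, ∑ z ∈ sw, q p * ((if (p : X × X).1 = z then (1:ℝ) else 0)
        + if (p : X × X).2 = z then (1:ℝ) else 0) / 2 = q p := by
      intro p
      rw [← Finset.sum_div, ← Finset.mul_sum, Finset.sum_add_distrib]
      simp [Finset.sum_ite_eq, hmem1 p, hmem2 p]
      ring
    rw [Finset.sum_congr rfl fun p _ => hper p]
    exact hqsum
  -- apply the decomposition
  obtain ⟨L, hL1, hL2, hLsmall⟩ := decomp' R (ε/8) S hR (by positivity) hS hU sw w hw0 hwsupp hw1
  -- cluster uniqueness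
  have hsym : Symmetric (fun C D : Finset X => ∀ a ∈ C, ∀ b ∈ D, 2*R < dist a b) :=
    fun C D h a ha b hb => by rw [dist_comm]; exact h b hb a ha
  have huniq : ∀ (z : X) (C D : Finset X), C ∈ L → D ∈ L →
      (∃ a ∈ C, dist z a ≤ R) → (∃ b ∈ D, dist z b ≤ R) → C = D := by
    rintro z C D hC hD ⟨a, ha, hza⟩ ⟨b, hb, hzb⟩
    by_contra hne
    haveI : Std.Symm (fun C D : Finset X => ∀ a ∈ C, ∀ b ∈ D, 2*R < dist a b) := ⟨fun _ _ h => hsym h⟩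
    have hsep := (List.Pairwise.forall hL2) hC hD hne a ha b hb
    have : dist a b ≤ 2*R := by
      have h3 := dist_triangle a z b
      have h4 : dist a z = dist z a := dist_comm a z
      linarith
    linarith
  -- the nearest-cluster map
  set P : X → Prop := fun z => ∃ C, C ∈ L ∧ ∃ a ∈ C, dist z a ≤ R with hPdef
  set c : X → X := fun z =>
    if h : P z then ((hL1 h.choose h.choose_spec.1).1).choose else z with hcdef
  have hrep_mem : ∀ (C : Finset X) (hC : C ∈ L), ((hL1 C hC).1).choose ∈ C :=
    fun C hC => ((hL1 C hC).1).choose_spec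
  have hc1 : ∀ z, dist z (c z) ≤ R + S := by
    intro z
    simp only [hcdef]
    by_cases h : P z
    · rw [dif_pos h]
      obtain ⟨hCL, a, haC, hza⟩ := h.choose_spec
      have hrm := hrep_mem h.choose hCL
      have hdiam := (hL1 h.choose hCL).2 a haC _ hrm
      calc dist z ((hL1 h.choose hCL).1).choose
          ≤ dist z a + dist a ((hL1 h.choose hCL).1).choose := dist_triangle _ _ _
        _ ≤ R + S := by linarith
    · rw [dif_neg h]
      simp only [dist_self]
      positivity
  have hGpred : ∀ z, (∃ C ∈ L, z ∈ C) → P z := by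
    rintro z ⟨C, hC, hzC⟩
    exact ⟨C, hC, z, hzC, by simp [dist_self, hR.le]⟩
  have hchoose_eq : ∀ (A A' : Finset X) (hA : A ∈ L) (hA' : A' ∈ L), A = A' →
      ((hL1 A hA).1).choose = ((hL1 A' hA').1).choose := by
    rintro A A' hA hA' rfl
    rfl
  have hc2 : ∀ x y : X, dist x y ≤ R → (∃ C ∈ L, x ∈ C) → (∃ C ∈ L, y ∈ C) → c x = c y := by
    rintro x y hxy ⟨C, hC, hxC⟩ ⟨D, hD, hyD⟩
    have hx' : P x := hGpred x ⟨C, hC, hxC⟩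
    have hy' : P y := hGpred y ⟨D, hD, hyD⟩
    simp only [hcdef]
    rw [dif_pos hx', dif_pos hy']
    refine hchoose_eq _ _ hx'.choose_spec.1 hy'.choose_spec.1 ?_
    have e1 : hx'.choose = C := huniq x _ C hx'.choose_spec.1 hC hx'.choose_spec.2
      ⟨x, hxC, by simp [dist_self, hR.le]⟩
    have e2 : hy'.choose = D := huniq y _ D hy'.choose_spec.1 hD hy'.choose_spec.2
      ⟨y, hyD, by simp [dist_self, hR.le]⟩
    have e3 : C = D := huniq x C D hC hD ⟨x, hxC, by simp [dist_self, hR.le]⟩ ⟨y, hyD, hxy⟩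
    rw [e1, e2, e3]
  -- the response strategy
  set ξs : X → X → ℝ := fun z t => if t = c z then (1:ℝ) else 0 with hξsdef
  have hξsK : ξs ∈ Kset B := by
    intro x
    have hcB : c x ∈ B x := (hBiff x (c x)).mpr (hc1 x)
    refine ⟨fun z => by rw [hξsdef]; positivity, fun z hz => ?_, ?_⟩
    · have : z ≠ c x := fun h => hz (h ▸ hcB)
      simp [hξsdef, this]
    · rw [hξsdef]
      rw [Finset.sum_ite_eq' (B x) (c x) (fun _ => (1:ℝ))]
      simp [hcB]
  -- payoff estimate for the response
  have hgzero : ∀ p : ↥F, (∃ C ∈ L, (p : X × X).1 ∈ C) → (∃ C ∈ L, (p : X × X).2 ∈ C) →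
      gpay B (p : X × X) ξs = 0 := by
    intro p h1 h2
    have hcc : c (p : X × X).1 = c (p : X × X).2 := hc2 _ _ (hF _ p.2) h1 h2
    rw [gpay]
    refine Finset.sum_eq_zero fun z _ => ?_
    simp [hξsdef, hcc]
  have hbadpair : ∑ p : ↥F, q p * gpay B (p : X × X) ξs ≤ ε / 2 := by
    have hterm : ∀ p : ↥F, q p * gpay B (p : X × X) ξs
        ≤ 2 * (q p * ((if ∃ C ∈ L, (p : X × X).1 ∈ C then (0:ℝ) else 1)
          + (if ∃ C ∈ L, (p : X × X).2 ∈ C then (0:ℝ) else 1))) := by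
      intro p
      by_cases h1 : ∃ C ∈ L, (p : X × X).1 ∈ C
      · by_cases h2 : ∃ C ∈ L, (p : X × X).2 ∈ C
        · rw [hgzero p h1 h2]
          simp [h1, h2]
        · have := gpay_le_two hξsK (p : X × X)
          have := gpay_nonneg (B := B) (p : X × X) ξs
          have := hq0 p
          simp only [if_pos h1, if_neg h2]
          nlinarith
      · have := gpay_le_two hξsK (p : X × X)
        have := gpay_nonneg (B := B) (p : X × X) ξs
        have := hq0 p
        simp only [if_neg h1]
        have : (0:ℝ) ≤ if ∃ C ∈ L, (p : X × X).2 ∈ C then (0:ℝ) else 1 := by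
          split <;> norm_num
        nlinarith
    calc ∑ p : ↥F, q p * gpay B (p : X × X) ξs
        ≤ ∑ p : ↥F, 2 * (q p * ((if ∃ C ∈ L, (p : X × X).1 ∈ C then (0:ℝ) else 1)
          + (if ∃ C ∈ L, (p : X × X).2 ∈ C then (0:ℝ) else 1))) :=
          Finset.sum_le_sum fun p _ => hterm p
      _ = 4 * ∑ z ∈ sw.filter (fun z => ¬ ∃ C ∈ L, z ∈ C), w z := by
          have hswz : ∀ p : ↥F,
              ∑ z ∈ sw.filter (fun z => ¬ ∃ C ∈ L, z ∈ C),
                q p * ((if (p : X × X).1 = z then (1:ℝ) else 0)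
                  + (if (p : X × X).2 = z then (1:ℝ) else 0)) / 2
              = q p * ((if ∃ C ∈ L, (p : X × X).1 ∈ C then (0:ℝ) else 1)
                  + (if ∃ C ∈ L, (p : X × X).2 ∈ C then (0:ℝ) else 1)) / 2 := by
            intro p
            rw [← Finset.sum_div, ← Finset.mul_sum, Finset.sum_add_distrib]
            rw [Finset.sum_ite_eq (sw.filter (fun z => ¬ ∃ C ∈ L, z ∈ C)) ((p : X × X).1) (fun _ => (1:ℝ)),
              Finset.sum_ite_eq (sw.filter (fun z => ¬ ∃ C ∈ L, z ∈ C)) ((p : X × X).2) (fun _ => (1:ℝ))]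
            congr 3
            · by_cases hg : ∃ C ∈ L, (p : X × X).1 ∈ C <;>
                simp [Finset.mem_filter, hg, hmem1 p]
            · by_cases hg : ∃ C ∈ L, (p : X × X).2 ∈ C <;>
                simp [Finset.mem_filter, hg, hmem2 p]
          have hW' : ∑ z ∈ sw.filter (fun z => ¬ ∃ C ∈ L, z ∈ C), w z
              = ∑ p : ↥F, q p * ((if ∃ C ∈ L, (p : X × X).1 ∈ C then (0:ℝ) else 1)
                  + (if ∃ C ∈ L, (p : X × X).2 ∈ C then (0:ℝ) else 1)) / 2 := by
            simp only [hwdef]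
            rw [Finset.sum_comm]
            exact Finset.sum_congr rfl fun p _ => hswz p
          rw [hW', Finset.mul_sum]
          exact Finset.sum_congr rfl fun p _ => by ring
      _ ≤ 4 * (ε/8) := by linarith [hLsmall]
      _ = ε / 2 := by ring
  have := hkeyq ξs hξsK
  linarith

/-- Property A type conclusion: uniformly supported approximate invariant means. -/
lemma propA (hbg : BoundedGeometry X) (h : ULAmu X) (R ε : ℝ) (hR : 0 < R) (hε : 0 < ε) :
    ∃ T : ℝ, 0 < T ∧ ∃ ξ : X → X → ℝ,
      (∀ x z, 0 ≤ ξ x z) ∧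
      (∀ x z, ¬ dist x z ≤ T → ξ x z = 0) ∧
      (∀ x, HasSum (ξ x) 1) ∧
      (∀ x y, dist x y ≤ R → ∀ s : Finset X, ∑ z ∈ s, |ξ x z - ξ y z| ≤ ε) := by
  obtain ⟨S, hS, hU⟩ := h (2*R) (by linarith) (ε/8) (by positivity)
  set T := R + S with hTdef
  have hT : 0 < T := by rw [hTdef]; linarith
  have hfin : ∀ x : X, {y | dist x y ≤ T}.Finite := fun x => ((hbg T hT).choose_spec x).1
  set B : X → Finset X := fun x => (hfin x).toFinset with hBdef
  have hBiff : ∀ x z, z ∈ B x ↔ dist x z ≤ T := fun x z => by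
    simp [hBdef, Set.Finite.mem_toFinset]
  set Cset : X × X → Set (X → X → ℝ) := fun p => {ξ | dist p.1 p.2 ≤ R → gpay B p ξ ≤ ε}
    with hCdef
  have hCclosed : ∀ p, IsClosed (Cset p) := by
    intro p
    by_cases hp : dist p.1 p.2 ≤ R
    · have : Cset p = {ξ | gpay B p ξ ≤ ε} := by ext ξ; simp [hCdef, hp]
      rw [this]
      exact isClosed_le (gpay_continuous p) continuous_const
    · have : Cset p = Set.univ := by ext ξ; simp [hCdef, hp]
      rw [this]
      exact isClosed_univ
  have hne : (Kset B ∩ ⋂ p, Cset p).Nonempty := by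
    by_contra hempty
    rw [Set.not_nonempty_iff_eq_empty] at hempty
    obtain ⟨u, hu⟩ := (Kset_isCompact (B := B)).elim_finite_subfamily_closed Cset hCclosed hempty
    obtain ⟨ξ, hξK, hξu⟩ := finiteSat R ε S hR hε hS.le hU B (fun x z => hBiff x z)
      (u.filter (fun p => dist p.1 p.2 ≤ R)) (fun p hp => (Finset.mem_filter.mp hp).2)
    have hmem : ξ ∈ Kset B ∩ ⋂ p ∈ u, Cset p := by
      refine ⟨hξK, ?_⟩
      simp only [Set.mem_iInter]
      intro p hp
      intro hdist
      exact hξu p (Finset.mem_filter.mpr ⟨hp, hdist⟩)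
    rw [hu] at hmem
    exact hmem
  obtain ⟨ξ, hξK, hξC⟩ := hne
  refine ⟨T, hT, ξ, fun x z => (hξK x).1 z,
    fun x z hz => (hξK x).2.1 z (fun hm => hz ((hBiff x z).mp hm)), ?_, ?_⟩
  · intro x
    have h0 : ∀ z ∉ B x, ξ x z = 0 := (hξK x).2.1
    have hsum : HasSum (ξ x) (∑ z ∈ B x, ξ x z) := hasSum_sum_of_ne_finset_zero (s := B x) (f := ξ x) h0
    rwa [(hξK x).2.2] at hsum
  · intro x y hxy s
    have hC : gpay B (x, y) ξ ≤ ε := Set.mem_iInter.mp hξC (x, y) hxy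
    calc ∑ z ∈ s, |ξ x z - ξ y z|
        = ∑ z ∈ s.filter (fun z => z ∈ B x ∪ B y), |ξ x z - ξ y z| := by
          rw [← Finset.sum_filter_add_sum_filter_not s (fun z => z ∈ B x ∪ B y)
            (fun z => |ξ x z - ξ y z|)]
          have hz0 : ∑ z ∈ s.filter (fun z => ¬ z ∈ B x ∪ B y), |ξ x z - ξ y z| = 0 :=
            Finset.sum_eq_zero fun z hz => by
              have hz' := (Finset.mem_filter.mp hz).2
              rw [Finset.mem_union] at hz'
              push_neg at hz'
              rw [(hξK x).2.1 z hz'.1, (hξK y).2.1 z hz'.2]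
              simp
          rw [hz0, add_zero]
      _ ≤ ∑ z ∈ B x ∪ B y, |ξ x z - ξ y z| :=
          Finset.sum_le_sum_of_subset_of_nonneg
            (fun z hz => (Finset.mem_filter.mp hz).2) (fun z _ _ => abs_nonneg _)
      _ ≤ ε := hC

lemma sqrt_sub_sq_le_two {a b : ℝ} (ha : 0 ≤ a) (hb : 0 ≤ b) :
    (Real.sqrt a - Real.sqrt b)^2 ≤ a + b := by
  have h1 := Real.sq_sqrt ha
  have h2 := Real.sq_sqrt hb
  have h3 := Real.sqrt_nonneg a
  have h4 := Real.sqrt_nonneg b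
  nlinarith [mul_nonneg h3 h4]

lemma sqrt_sub_sq_le_abs {a b : ℝ} (ha : 0 ≤ a) (hb : 0 ≤ b) :
    (Real.sqrt a - Real.sqrt b)^2 ≤ |a - b| := by
  rcases le_total b a with hab | hab
  · rw [abs_of_nonneg (by linarith)]
    have h1 := Real.sq_sqrt ha
    have h2 := Real.sq_sqrt hb
    have h5 : Real.sqrt b ≤ Real.sqrt a := Real.sqrt_le_sqrt hab
    have h4 := Real.sqrt_nonneg b
    nlinarith
  · rw [abs_of_nonpos (by linarith)]
    have h1 := Real.sq_sqrt ha
    have h2 := Real.sq_sqrt hb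
    have h5 : Real.sqrt a ≤ Real.sqrt b := Real.sqrt_le_sqrt hab
    have h4 := Real.sqrt_nonneg a
    nlinarith

lemma countable_of_bg (hbg : BoundedGeometry X) : Countable X := by
  cases isEmpty_or_nonempty X with
  | inl hemp => infer_instance
  | inr hne =>
    obtain ⟨x₀⟩ := hne
    have hsub : (Set.univ : Set X) ⊆ ⋃ n : ℕ, {y | dist x₀ y ≤ (n:ℝ)+1} := by
      intro y _
      refine Set.mem_iUnion.mpr ⟨Nat.ceil (dist x₀ y), ?_⟩
      simp only [Set.mem_setOf_eq]
      have := Nat.le_ceil (dist x₀ y)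
      linarith
    have hcu : (Set.univ : Set X).Countable :=
      Set.Countable.mono hsub (Set.countable_iUnion fun n =>
        (((hbg ((n:ℝ)+1) (by positivity)).choose_spec x₀).1).countable)
    exact Set.countable_univ_iff.mp hcu

end ULAproof

open scoped ENNReal

/-- Corollary 3.5: $ULA_\mu$ implies coarse embeddability into the real Hilbert space
$\ell^2(\mathbb N)$ for bounded geometry metric spaces. -/
theorem ulamu_implies_coarse_embeddable {X : Type*} [MetricSpace X]
    (hbg : BoundedGeometry X) (h : ULAmu X) :
    ∃ f : X → lp (fun _ : ℕ => ℝ) 2, CoarseEmbedding f := by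
  classical
  haveI : Fact ((1:ℝ≥0∞) ≤ 2) := ⟨one_le_two⟩
  cases isEmpty_or_nonempty X with
  | inl hemp =>
    exact ⟨fun _ => 0, id, id, monotone_id, monotone_id, Filter.tendsto_id,
      fun x₁ _ => (hemp.false x₁).elim⟩
  | inr hne =>
    obtain ⟨x₀⟩ := hne
    haveI : Countable X := ULAproof.countable_of_bg hbg
    obtain ⟨ι, hι⟩ := exists_injective_nat (ℕ × X)
    choose T hTpos ξ hnn hsupp hsum hlip using
      fun k : ℕ => ULAproof.propA hbg h ((k:ℝ)+1) ((1/2:ℝ)^k) (by positivity) (by positivity)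
    set sq : ℕ → X → X → ℝ := fun k x z => Real.sqrt (ξ k x z) with hsqdef
    have hsqnn : ∀ k x z, 0 ≤ sq k x z := fun k x z => Real.sqrt_nonneg _
    have hsq0 : ∀ k x z, T k < dist x z → sq k x z = 0 := by
      intro k x z hz
      simp [hsqdef, hsupp k x z (not_le.mpr hz)]
    have hfinball : ∀ (r : ℝ), 0 < r → ∀ x : X, {y : X | dist x y ≤ r}.Finite :=
      fun r hr x => ((hbg r hr).choose_spec x).1
    set U : ℕ → X → X → Finset X := fun k x y =>
      (hfinball (T k) (hTpos k) x).toFinset ∪ (hfinball (T k) (hTpos k) y).toFinset with hUdef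
    have hUmem : ∀ k x y z, z ∈ U k x y ↔ (dist x z ≤ T k ∨ dist y z ≤ T k) := by
      intro k x y z
      simp [hUdef, Set.Finite.mem_toFinset]
    have hoff : ∀ k x y z, z ∉ U k x y → (sq k x z - sq k y z) ^ 2 = 0 := by
      intro k x y z hz
      rw [hUmem] at hz
      push_neg at hz
      rw [hsq0 k x z hz.1, hsq0 k y z hz.2]
      norm_num
    have hSummS : ∀ k x y, Summable (fun z => (sq k x z - sq k y z)^2) :=
      fun k x y => summable_of_ne_finset_zero (hoff k x y)
    set D : X → X → ℕ → ℝ := fun x y k => ∑' z, (sq k x z - sq k y z)^2 with hDdef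
    have hDnn : ∀ x y k, 0 ≤ D x y k := fun x y k => tsum_nonneg (fun z => sq_nonneg _)
    have hsum2 : ∀ k x y, HasSum (fun z => ξ k x z + ξ k y z) 2 := by
      intro k x y
      have := (hsum k x).add (hsum k y)
      norm_num at this
      exact this
    have hDle2 : ∀ x y k, D x y k ≤ 2 := by
      intro x y k
      simp only [hDdef]
      calc ∑' z, (sq k x z - sq k y z)^2
          ≤ ∑' z, (ξ k x z + ξ k y z) := by
            refine Summable.tsum_le_tsum (fun z => ?_) (hSummS k x y) (hsum2 k x y).summable
            exact ULAproof.sqrt_sub_sq_le_two (hnn k x z) (hnn k y z)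
        _ = 2 := (hsum2 k x y).tsum_eq
    have hDlip : ∀ (x y : X) (k : ℕ), dist x y ≤ (k:ℝ)+1 → D x y k ≤ (1/2:ℝ)^k := by
      intro x y k hd
      refine Summable.tsum_le_of_sum_le (hSummS k x y) fun s => ?_
      calc ∑ z ∈ s, (sq k x z - sq k y z)^2
          ≤ ∑ z ∈ s, |ξ k x z - ξ k y z| :=
            Finset.sum_le_sum fun z _ => ULAproof.sqrt_sub_sq_le_abs (hnn k x z) (hnn k y z)
        _ ≤ (1/2:ℝ)^k := hlip k x y hd s
    have hDeq2 : ∀ (x y : X) (k : ℕ), 2 * T k < dist x y → D x y k = 2 := by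
      intro x y k hd
      have hcross : ∀ z, sq k x z * sq k y z = 0 := by
        intro z
        by_cases d1 : dist x z ≤ T k
        · have d2 : T k < dist y z := by
            by_contra d2
            push_neg at d2
            have := dist_triangle x z y
            rw [dist_comm z y] at this
            linarith
          rw [hsq0 k y z d2, mul_zero]
        · rw [hsq0 k x z (not_le.mp d1), zero_mul]
      have hterm : ∀ z, (sq k x z - sq k y z)^2 = ξ k x z + ξ k y z := by
        intro z
        have e1 : sq k x z ^ 2 = ξ k x z := Real.sq_sqrt (hnn k x z)
        have e2 : sq k y z ^ 2 = ξ k y z := Real.sq_sqrt (hnn k y z)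
        have e3 := hcross z
        nlinarith [e1, e2, e3]
      simp only [hDdef]
      rw [tsum_congr hterm]
      exact (hsum2 k x y).tsum_eq
    set bound : X → X → ℕ → ℝ := fun x y k =>
      (if (k:ℝ)+1 < dist x y then (2:ℝ) else 0) + (1/2:ℝ)^k with hbounddef
    have hDb : ∀ (x y : X) (k : ℕ), D x y k ≤ bound x y k := by
      intro x y k
      simp only [hbounddef]
      by_cases hc : dist x y ≤ (k:ℝ)+1
      · have : ¬ ((k:ℝ)+1 < dist x y) := not_lt.mpr hc
        simp only [this, if_false]
        have := hDlip x y k hc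
        linarith
      · push_neg at hc
        simp only [hc, if_true]
        have h2 := hDle2 x y k
        have h3 : (0:ℝ) ≤ (1/2:ℝ)^k := by positivity
        linarith
    have hboundsumm : ∀ x y, Summable (bound x y) := by
      intro x y
      refine Summable.add ?_ (summable_geometric_of_lt_one (by norm_num) (by norm_num))
      refine summable_of_ne_finset_zero (s := Finset.range (Nat.ceil (dist x y))) ?_
      intro k hk
      rw [Finset.mem_range, not_lt] at hk
      have : dist x y ≤ (k:ℝ) + 1 := by
        have h1 : dist x y ≤ (Nat.ceil (dist x y) : ℝ) := Nat.le_ceil _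
        have h2 : (Nat.ceil (dist x y) : ℝ) ≤ (k:ℝ) := by exact_mod_cast hk
        linarith
      simp [not_lt.mpr this]
    have hDsummable : ∀ x y, Summable (D x y) :=
      fun x y => Summable.of_nonneg_of_le (hDnn x y) (hDb x y) (hboundsumm x y)
    have hDsum_le : ∀ x y, ∑' k, D x y k ≤ 2 * dist x y + 4 := by
      intro x y
      have h1 : ∑' k, D x y k ≤ ∑' k, bound x y k :=
        Summable.tsum_le_tsum (hDb x y) (hDsummable x y) (hboundsumm x y)
      have h2 : ∑' k, bound x y k
          = (∑' k : ℕ, (if (k:ℝ)+1 < dist x y then (2:ℝ) else 0)) + ∑' k : ℕ, (1/2:ℝ)^k := by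
        simp only [hbounddef]
        exact Summable.tsum_add (by
          refine summable_of_ne_finset_zero (s := Finset.range (Nat.ceil (dist x y))) ?_
          intro k hk
          rw [Finset.mem_range, not_lt] at hk
          have h1 : dist x y ≤ (Nat.ceil (dist x y) : ℝ) := Nat.le_ceil _
          have h2 : (Nat.ceil (dist x y) : ℝ) ≤ (k:ℝ) := by exact_mod_cast hk
          have : ¬ ((k:ℝ)+1 < dist x y) := by push_neg; linarith
          simp [this]) (summable_geometric_of_lt_one (by norm_num) (by norm_num))
      have h3 : ∑' k : ℕ, (1/2:ℝ)^k = 2 := by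
        rw [tsum_geometric_of_lt_one (by norm_num) (by norm_num)]
        norm_num
      have h4 : ∑' k : ℕ, (if (k:ℝ)+1 < dist x y then (2:ℝ) else 0) ≤ 2 * (dist x y + 1) := by
        rw [tsum_eq_sum (s := Finset.range (Nat.ceil (dist x y)))
          (fun k hk => by
            rw [Finset.mem_range, not_lt] at hk
            have h1 : dist x y ≤ (Nat.ceil (dist x y) : ℝ) := Nat.le_ceil _
            have h2 : (Nat.ceil (dist x y) : ℝ) ≤ (k:ℝ) := by exact_mod_cast hk
            have : ¬ ((k:ℝ)+1 < dist x y) := by push_neg; linarith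
            simp [this])]
        calc ∑ k ∈ Finset.range (Nat.ceil (dist x y)), (if (k:ℝ)+1 < dist x y then (2:ℝ) else 0)
            ≤ ∑ _k ∈ Finset.range (Nat.ceil (dist x y)), (2:ℝ) := by
              refine Finset.sum_le_sum fun k _ => ?_
              split <;> norm_num
          _ = 2 * (Nat.ceil (dist x y) : ℝ) := by
              rw [Finset.sum_const, Finset.card_range, nsmul_eq_mul]
              ring
          _ ≤ 2 * (dist x y + 1) := by
              have := Nat.ceil_lt_add_one (dist_nonneg (x := x) (y := y))
              linarith
      linarith
        -- the coordinate functions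
    set G : X → ℕ × X → ℝ := fun x q => sq q.1 x q.2 - sq q.1 x₀ q.2 with hGdef
    set FF : X → ℕ → ℝ := fun x => Function.extend ι (G x) 0 with hFFdef
    have hGdiff : ∀ x y (q : ℕ × X), G x q - G y q = sq q.1 x q.2 - sq q.1 y q.2 := by
      intro x y q
      simp only [hGdef]
      ring
    have hextsupp : ∀ (g : ℕ × X → ℝ) n, n ∉ Set.range ι → Function.extend ι g 0 n = 0 := by
      intro g n hn
      rw [Function.extend_apply' _ _ _ (by simpa [Set.mem_range] using hn)]
      rfl
    have hFFdiff : ∀ x y n, FF x n - FF y n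
        = Function.extend ι (fun q => sq q.1 x q.2 - sq q.1 y q.2) 0 n := by
      intro x y n
      simp only [hFFdef]
      by_cases hn : ∃ q, ι q = n
      · obtain ⟨q, rfl⟩ := hn
        rw [hι.extend_apply, hι.extend_apply, hι.extend_apply, ← hGdiff]
      · rw [Function.extend_apply' _ _ _ hn, Function.extend_apply' _ _ _ hn,
          Function.extend_apply' _ _ _ hn]
        simp
    have hSumProd : ∀ x y, Summable (fun q : ℕ × X => (sq q.1 x q.2 - sq q.1 y q.2)^2) := by
      intro x y
      rw [summable_prod_of_nonneg (fun q => sq_nonneg _)]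
      refine ⟨fun k => hSummS k x y, ?_⟩
      have := hDsummable x y
      simp only [hDdef] at this
      exact this
    have htsumProd : ∀ x y, ∑' q : ℕ × X, (sq q.1 x q.2 - sq q.1 y q.2)^2
        = ∑' k, D x y k := by
      intro x y
      rw [Summable.tsum_prod' (hSumProd x y) (fun k => hSummS k x y)]
    have htoReal : ((2:ℝ≥0∞)).toReal = (2:ℝ) := by norm_num
    have habs : ∀ t : ℝ, ‖t‖ ^ (2:ℝ) = t^2 := by
      intro t
      rw [Real.norm_eq_abs, show (2:ℝ) = ((2:ℕ):ℝ) by norm_num, Real.rpow_natCast, sq_abs]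
    have hmem : ∀ x, Memℓp (FF x) 2 := by
      intro x
      apply memℓp_gen
      rw [htoReal]
      have hsumG : Summable (fun q : ℕ × X => (G x q)^2) := by
        have := hSumProd x x₀
        simp only [hGdef]
        exact this
      have h1 : Summable (fun n => (FF x n)^2) := by
        have hcomp : (fun n => (FF x n)^2) ∘ ι = fun q => (G x q)^2 := by
          funext q
          simp only [Function.comp_apply, hFFdef, hι.extend_apply]
        refine (Function.Injective.summable_iff hι ?_).mp ?_
        · intro n hn
          simp only [hFFdef]
          rw [hextsupp _ n hn]
          norm_num
        · rw [hcomp]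
          exact hsumG
      exact h1.congr fun n => (habs (FF x n)).symm
    set fvec : X → lp (fun _ : ℕ => ℝ) 2 := fun x => ⟨FF x, hmem x⟩ with hfvecdef
    have hnorm2 : ∀ x y, ‖fvec x - fvec y‖^2 = ∑' k, D x y k := by
      intro x y
      have h0 : 0 < ((2:ℝ≥0∞)).toReal := by rw [htoReal]; norm_num
      have hrpow := lp.norm_rpow_eq_tsum h0 (fvec x - fvec y)
      rw [htoReal] at hrpow
      have hcoe : ∀ n, (↑(fvec x - fvec y) : ℕ → ℝ) n = FF x n - FF y n := by
        intro n
        simp only [hfvecdef]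
        rw [lp.coeFn_sub]
        simp
      have hsq : ‖fvec x - fvec y‖ ^ (2:ℝ) = ‖fvec x - fvec y‖^2 := by
        rw [show (2:ℝ) = ((2:ℕ):ℝ) by norm_num, Real.rpow_natCast]
      rw [← hsq, hrpow]
      calc ∑' n, ‖(↑(fvec x - fvec y) : ℕ → ℝ) n‖ ^ (2:ℝ)
          = ∑' n, (FF x n - FF y n)^2 := tsum_congr fun n => by rw [hcoe n, habs]
        _ = ∑' q : ℕ × X, (sq q.1 x q.2 - sq q.1 y q.2)^2 := by
            have hsupp2 : Function.support (fun n => (FF x n - FF y n)^2) ⊆ Set.range ι := by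
              intro n hn
              by_contra hnr
              apply hn
              simp only [Function.mem_support, not_not] at *
              rw [hFFdiff x y n, hextsupp _ n hnr]
              norm_num
            rw [← Function.Injective.tsum_eq hι hsupp2]
            refine tsum_congr fun q => ?_
            rw [hFFdiff x y (ι q), hι.extend_apply]
        _ = ∑' k, D x y k := htsumProd x y
    have hup : ∀ x y, dist (fvec x) (fvec y) ≤ Real.sqrt (2 * dist x y + 4) := by
      intro x y
      rw [dist_eq_norm]
      have h1 : ‖fvec x - fvec y‖ = Real.sqrt (‖fvec x - fvec y‖^2) :=
        (Real.sqrt_sq (norm_nonneg _)).symm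
      rw [h1, hnorm2]
      exact Real.sqrt_le_sqrt (hDsum_le x y)
    set cnt : ℝ → ℕ := fun t => ((Finset.range (Nat.ceil t)).filter (fun k => 2 * T k < t)).card
      with hcntdef
    have hcntmono : ∀ s t : ℝ, s ≤ t → cnt s ≤ cnt t := by
      intro s t hst
      refine Finset.card_le_card ?_
      intro k hk
      rw [Finset.mem_filter, Finset.mem_range] at hk ⊢
      exact ⟨lt_of_lt_of_le hk.1 (Nat.ceil_mono hst), lt_of_lt_of_le hk.2 hst⟩
    have hlow : ∀ x y, Real.sqrt (2 * (cnt (dist x y) : ℝ)) ≤ dist (fvec x) (fvec y) := by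
      intro x y
      rw [dist_eq_norm]
      have h1 : ‖fvec x - fvec y‖ = Real.sqrt (‖fvec x - fvec y‖^2) :=
        (Real.sqrt_sq (norm_nonneg _)).symm
      rw [h1, hnorm2]
      refine Real.sqrt_le_sqrt ?_
      have hsumfil : ∑ k ∈ (Finset.range (Nat.ceil (dist x y))).filter
            (fun k => 2 * T k < dist x y), D x y k
          = 2 * (cnt (dist x y) : ℝ) := by
        rw [Finset.sum_congr rfl (fun k hk => hDeq2 x y k (Finset.mem_filter.mp hk).2)]
        rw [Finset.sum_const, hcntdef, nsmul_eq_mul]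
        ring
      rw [← hsumfil]
      exact Summable.sum_le_tsum _ (fun k _ => hDnn x y k) (hDsummable x y)
    refine ⟨fvec, fun t => Real.sqrt (2 * (cnt t : ℝ)), fun t => Real.sqrt (2 * t + 4),
      ?_, ?_, ?_, ?_⟩
    · intro s t hst
      refine Real.sqrt_le_sqrt ?_
      have h1 := hcntmono s t hst
      have h2 : (cnt s : ℝ) ≤ (cnt t : ℝ) := by exact_mod_cast h1
      linarith
    · intro s t hst
      exact Real.sqrt_le_sqrt (by linarith)
    · rw [Filter.tendsto_atTop_atTop]
      intro b
      set K : ℕ := Nat.ceil (b^2/2) + 1 with hKdef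
      have hKb : b ≤ Real.sqrt (2 * (K:ℝ)) := by
        have h1 : b^2/2 ≤ (K:ℝ) := by
          have h2 := Nat.le_ceil (b^2/2)
          have h3 : (Nat.ceil (b^2/2) : ℝ) ≤ (K:ℝ) := by
            rw [hKdef]; push_cast; linarith
          linarith
        have h2 : b^2 ≤ 2*(K:ℝ) := by linarith
        calc b ≤ |b| := le_abs_self b
          _ = Real.sqrt (b^2) := (Real.sqrt_sq_eq_abs b).symm
          _ ≤ Real.sqrt (2*(K:ℝ)) := Real.sqrt_le_sqrt h2
      set N : ℝ := (K:ℝ) + (Finset.range K).sum (fun k => max (2*T k) 0) + 1 with hNdef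
      refine ⟨N, fun a ha => ?_⟩
      have hsum0 : (0:ℝ) ≤ (Finset.range K).sum (fun k => max (2*T k) 0) :=
        Finset.sum_nonneg fun k _ => le_max_right _ _
      have hKN : (K:ℝ) ≤ N := by
        rw [hNdef]
        linarith
      have hsub : Finset.range K ⊆ (Finset.range (Nat.ceil a)).filter (fun k => 2 * T k < a) := by
        intro k hk
        rw [Finset.mem_range] at hk
        rw [Finset.mem_filter, Finset.mem_range]
        constructor
        · have h1 : (k:ℝ) < (K:ℝ) := by exact_mod_cast hk
          have h2 : (K:ℝ) ≤ a := le_trans hKN ha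
          have h3 : (k:ℝ) < (Nat.ceil a : ℝ) := lt_of_lt_of_le h1 (le_trans h2 (Nat.le_ceil a))
          exact_mod_cast h3
        · have h1 : 2 * T k ≤ max (2*T k) 0 := le_max_left _ _
          have h2 : max (2*T k) 0 ≤ (Finset.range K).sum (fun k => max (2*T k) 0) :=
            Finset.single_le_sum (f := fun k => max (2*T k) 0)
              (fun i _ => le_max_right _ _) (Finset.mem_range.mpr hk)
          have h3 : (0:ℝ) ≤ (K:ℝ) := by positivity
          rw [hNdef] at ha
          linarith
      have hcard : K ≤ cnt a := by
        rw [hcntdef]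
        calc K = (Finset.range K).card := (Finset.card_range K).symm
          _ ≤ _ := Finset.card_le_card hsub
      calc b ≤ Real.sqrt (2*(K:ℝ)) := hKb
        _ ≤ Real.sqrt (2*(cnt a:ℝ)) := by
            refine Real.sqrt_le_sqrt ?_
            have h1 : (K:ℝ) ≤ (cnt a : ℝ) := by exact_mod_cast hcard
            linarith
    · intro x y
      exact ⟨hlow x y, hup x y⟩
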